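/- Let $V$ be a representation of $\mathfrak{sl}_2$-type operators: suppose $e,f,x$ act on $V$ with $x$ a nonzero scalar, and suppose an operator $\partial_f$ satisfies $[\partial_f,f]=1$, $[f\partial_f,e]=0$, and for each $v$ there is $k_0$ with $(fe)^kv=0$ for $k\ge k_0$. Then the operator $L=\exp(-fe/x)$ is well-defined, invertible, and for any $v$ with $\partial_f v=0$, the vector $L(v)$ satisfies $(e+x\partial_f)L(v)=0$. -/

import Mathlib

open Finset Polynomial

noncomputable section Stmt9Aux

/-- coefficients of `exp(-t/x)` -/
def stmt9cc (x : ℂ) (k : ℕ) : ℂ := (-1)^k / (k.factorial * x^k)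

/-- coefficients of `exp(t/x)` -/
def stmt9dd (x : ℂ) (k : ℕ) : ℂ := 1 / (k.factorial * x^k)

lemma stmt9_conv (x : ℂ) (hx : x ≠ 0) (m : ℕ) :
    ∑ ij ∈ Finset.HasAntidiagonal.antidiagonal m, stmt9cc x ij.1 * stmt9dd x ij.2
      = if m = 0 then 1 else 0 := by
  rw [Finset.Nat.sum_antidiagonal_eq_sum_range_succ_mk]
  have key : ∀ k ∈ Finset.range (m+1),
      stmt9cc x k * stmt9dd x (m - k)
        = ((-1)^k * (m.choose k : ℂ)) * (1 / (m.factorial * x^m)) := by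
    intro k hk
    rw [Finset.mem_range, Nat.lt_succ_iff] at hk
    have h1 : ((m.choose k * k.factorial * (m-k).factorial : ℕ) : ℂ)
        = ((m.factorial : ℕ) : ℂ) := by
      exact_mod_cast Nat.choose_mul_factorial_mul_factorial hk
    push_cast at h1
    have hxk : x^k * x^(m-k) = x^m := by
      rw [← pow_add, Nat.add_sub_cancel' hk]
    have hk0 : ((k.factorial : ℕ) : ℂ) ≠ 0 := by exact_mod_cast k.factorial_ne_zero
    have hmk0 : (((m-k).factorial : ℕ) : ℂ) ≠ 0 := by exact_mod_cast (m-k).factorial_ne_zero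
    have hm0 : ((m.factorial : ℕ) : ℂ) ≠ 0 := by exact_mod_cast m.factorial_ne_zero
    have hxm0 : x^m ≠ 0 := pow_ne_zero _ hx
    unfold stmt9cc stmt9dd
    rw [← hxk]
    field_simp
    linear_combination -1 * h1
  rw [Finset.sum_congr rfl key, ← Finset.sum_mul]
  have halt : (∑ k ∈ Finset.range (m+1), (-1)^k * (m.choose k : ℂ))
      = if m = 0 then 1 else 0 := by
    have h0 := Int.alternating_sum_range_choose (n := m)
    exact_mod_cast h0
  rw [halt]
  by_cases hm : m = 0
  · subst hm; simp [Nat.factorial]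
  · simp [hm]

end Stmt9Aux

theorem stmt_9 (V : Type*) [AddCommGroup V] [Module ℂ V]
    (e f df : Module.End ℂ V) (x : ℂ) (hx : x ≠ 0)
    (hdff : df * f - f * df = 1)
    (hcomm : (f * df) * e = e * (f * df))
    (hnil : ∀ v : V, ∃ k₀ : ℕ, ∀ k, k₀ ≤ k → ((f * e) ^ k) v = 0) :
    ∃ L : V →ₗ[ℂ] V,
      (∀ (v : V) (k₀ : ℕ), (∀ k, k₀ ≤ k → ((f * e) ^ k) v = 0) →
        L v = ∑ k ∈ Finset.range k₀,
          (((-1 : ℂ) ^ k / (k.factorial * x ^ k))) • ((f * e) ^ k) v) ∧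
      Function.Bijective L ∧
      (∀ v : V, df v = 0 → e (L v) + x • df (L v) = 0) := by
  classical
  set T : Module.End ℂ V := f * e with hT
  -- truncated series
  set S : (ℕ → ℂ) → ℕ → Module.End ℂ V :=
    fun a n => ∑ k ∈ Finset.range n, a k • T^k with hS
  have hSapp : ∀ a n (v : V), S a n v = ∑ k ∈ Finset.range n, a k • (T^k) v := by
    intro a n v
    simp [hS, LinearMap.sum_apply]
  -- stability of the truncated series
  have stab : ∀ (a : ℕ → ℂ) (v : V) (k₀ n : ℕ),
      (∀ k, k₀ ≤ k → (T^k) v = 0) → k₀ ≤ n → S a n v = S a k₀ v := by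
    intro a v k₀ n hb hle
    rw [hSapp, hSapp]
    refine (Finset.sum_subset (Finset.range_subset_range.2 hle) ?_).symm
    intro k hk hk'
    rw [Finset.mem_range, not_lt] at hk'
    rw [hb k hk', smul_zero]
  set N : V → ℕ := fun v => (hnil v).choose with hNdef
  have hN : ∀ v, ∀ k, N v ≤ k → (T^k) v = 0 := fun v => (hnil v).choose_spec
  set c : ℕ → ℂ := stmt9cc x with hc
  set d : ℕ → ℂ := stmt9dd x with hd
  -- the linear maps L and M
  have mkmap : ∀ a : ℕ → ℂ, ∃ L : V →ₗ[ℂ] V, ∀ v, L v = S a (N v) v := by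
    intro a
    refine ⟨{ toFun := fun v => S a (N v) v, map_add' := ?_, map_smul' := ?_ }, fun v => rfl⟩
    · intro v w
      show S a (N (v+w)) (v+w) = S a (N v) v + S a (N w) w
      set n := max (N (v+w)) (max (N v) (N w)) with hn
      have h1 : S a n (v+w) = S a (N (v+w)) (v+w) :=
        stab a _ _ _ (hN _) (le_max_left _ _)
      have h2 : S a n v = S a (N v) v :=
        stab a _ _ _ (hN _) (le_trans (le_max_left _ _) (le_max_right _ _))
      have h3 : S a n w = S a (N w) w :=
        stab a _ _ _ (hN _) (le_trans (le_max_right _ _) (le_max_right _ _))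
      rw [← h1, ← h2, ← h3, map_add]
    · intro r v
      show S a (N (r • v)) (r • v) = (RingHom.id ℂ) r • S a (N v) v
      set n := max (N (r • v)) (N v) with hn
      have hbv : ∀ k, N v ≤ k → (T^k) (r • v) = 0 := by
        intro k hk; rw [map_smul, hN v k hk, smul_zero]
      have h1 : S a n (r • v) = S a (N (r • v)) (r • v) :=
        stab a _ _ _ (hN _) (le_max_left _ _)
      have h2 : S a n v = S a (N v) v := stab a _ _ _ (hN _) (le_max_right _ _)
      simp only [RingHom.id_apply]
      rw [← h1, ← h2, map_smul]
  obtain ⟨L, hL⟩ := mkmap c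
  obtain ⟨M, hM⟩ := mkmap d
  -- L v = S c k₀ v for any valid bound k₀
  have hLval : ∀ (v : V) (k₀ : ℕ), (∀ k, k₀ ≤ k → (T^k) v = 0) → L v = S c k₀ v := by
    intro v k₀ hb
    rw [hL]
    calc S c (N v) v = S c (max (N v) k₀) v := (stab c v _ _ (hN v) (le_max_left _ _)).symm
      _ = S c k₀ v := stab c v _ _ hb (le_max_right _ _)
  have hMval : ∀ (v : V) (k₀ : ℕ), (∀ k, k₀ ≤ k → (T^k) v = 0) → M v = S d k₀ v := by
    intro v k₀ hb
    rw [hM]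
    calc S d (N v) v = S d (max (N v) k₀) v := (stab d v _ _ (hN v) (le_max_left _ _)).symm
      _ = S d k₀ v := stab d v _ _ hb (le_max_right _ _)
  -- polynomials
  set P : ℕ → Polynomial ℂ := fun n => ∑ k ∈ Finset.range n, Polynomial.monomial k (c k)
    with hP
  set Q : ℕ → Polynomial ℂ := fun n => ∑ k ∈ Finset.range n, Polynomial.monomial k (d k)
    with hQ
  have haevP : ∀ n, Polynomial.aeval T (P n) = S c n := by
    intro n
    rw [hP]
    simp only [map_sum, Polynomial.aeval_monomial, hS]
    refine Finset.sum_congr rfl fun k _ => ?_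
    rw [Algebra.algebraMap_eq_smul_one, smul_mul_assoc, one_mul]
  have haevQ : ∀ n, Polynomial.aeval T (Q n) = S d n := by
    intro n
    rw [hQ]
    simp only [map_sum, Polynomial.aeval_monomial, hS]
    refine Finset.sum_congr rfl fun k _ => ?_
    rw [Algebra.algebraMap_eq_smul_one, smul_mul_assoc, one_mul]
  have hcoeffP : ∀ n k, (P n).coeff k = if k < n then c k else 0 := by
    intro n k
    rw [hP]
    simp [Polynomial.finset_sum_coeff, Polynomial.coeff_monomial]
  have hcoeffQ : ∀ n k, (Q n).coeff k = if k < n then d k else 0 := by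
    intro n k
    rw [hQ]
    simp [Polynomial.finset_sum_coeff, Polynomial.coeff_monomial]
  -- P n * Q n = 1 + R * X^n
  have hdvd : ∀ n, (Polynomial.X : Polynomial ℂ)^n ∣ (P n * Q n - 1) := by
    intro n
    rw [Polynomial.X_pow_dvd_iff]
    intro m hm
    rw [Polynomial.coeff_sub, Polynomial.coeff_mul]
    have : ∀ ij ∈ Finset.HasAntidiagonal.antidiagonal m, (P n).coeff ij.1 * (Q n).coeff ij.2
        = stmt9cc x ij.1 * stmt9dd x ij.2 := by
      intro ij hij
      rw [Finset.HasAntidiagonal.mem_antidiagonal] at hij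
      have h1 : ij.1 < n := lt_of_le_of_lt (hij ▸ Nat.le_add_right _ _) hm
      have h2 : ij.2 < n := lt_of_le_of_lt (hij ▸ Nat.le_add_left _ _) hm
      rw [hcoeffP, hcoeffQ, if_pos h1, if_pos h2]
    rw [Finset.sum_congr rfl this, stmt9_conv x hx m]
    by_cases hm0 : m = 0
    · subst hm0; simp
    · simp [hm0, Polynomial.coeff_one, hm0]
  -- composition is identity where nilpotent
  have hcompose : ∀ (v : V) (n : ℕ), (T^n) v = 0 →
      S c n (S d n v) = v ∧ S d n (S c n v) = v := by
    intro v n hv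
    obtain ⟨R, hR⟩ := hdvd n
    have hPQ : P n * Q n = 1 + R * Polynomial.X^n := by
      rw [mul_comm R]; linear_combination hR
    have key : ∀ A B : Module.End ℂ V,
        A = Polynomial.aeval T (P n) → B = Polynomial.aeval T (Q n) →
        A (B v) = v := by
      intro A B hA hB
      have : A * B = 1 + Polynomial.aeval T R * T^n := by
        rw [hA, hB, ← map_mul, hPQ, map_add, map_one, map_mul, map_pow,
          Polynomial.aeval_X]
      have happ : (A * B) v = v + (Polynomial.aeval T R) ((T^n) v) := by
        rw [this]; rfl
      calc A (B v) = (A * B) v := rfl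
        _ = v + (Polynomial.aeval T R) ((T^n) v) := happ
        _ = v := by rw [hv, map_zero, add_zero]
    constructor
    · exact key _ _ (haevP n).symm (haevQ n).symm
    · have hQP : Q n * P n = 1 + R * Polynomial.X^n := by rw [mul_comm]; exact hPQ
      have : S d n * S c n = 1 + Polynomial.aeval T R * T^n := by
        rw [← haevP n, ← haevQ n, ← map_mul, hQP, map_add, map_one, map_mul, map_pow,
          Polynomial.aeval_X]
      calc S d n (S c n v) = (S d n * S c n) v := rfl
        _ = v + (Polynomial.aeval T R) ((T^n) v) := by rw [this]; rfl
        _ = v := by rw [hv, map_zero, add_zero]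
  -- bijectivity
  have hLM : ∀ v, L (M v) = v := by
    intro v
    have hbM : ∀ k, N v ≤ k → (T^k) (M v) = 0 := by
      intro k hk
      rw [hM, hSapp, map_sum]
      refine Finset.sum_eq_zero fun j _ => ?_
      rw [map_smul, ← Module.End.mul_apply, ← pow_add, hN v _ (le_trans hk (Nat.le_add_right _ _)),
        smul_zero]
    rw [hLval (M v) (N v) hbM, hMval v (N v) (hN v)]
    exact (hcompose v (N v) (hN v (N v) le_rfl)).1
  have hML : ∀ v, M (L v) = v := by
    intro v
    have hbL : ∀ k, N v ≤ k → (T^k) (L v) = 0 := by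
      intro k hk
      rw [hL, hSapp, map_sum]
      refine Finset.sum_eq_zero fun j _ => ?_
      rw [map_smul, ← Module.End.mul_apply, ← pow_add, hN v _ (le_trans hk (Nat.le_add_right _ _)),
        smul_zero]
    rw [hMval (L v) (N v) hbL, hLval v (N v) (hN v)]
    exact (hcompose v (N v) (hN v (N v) le_rfl)).2
  -- the df-commutation lemma
  have step : ∀ w : V, df (T w) = e (f (df w)) + e w := by
    intro w
    have h1 : df * f = f * df + 1 := by
      have := hdff; linear_combination (norm := noncomm_ring) this
    have h : df * T = e * (f * df) + e := by
      rw [hT, ← mul_assoc, h1, add_mul, one_mul, hcomm]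
    calc df (T w) = (df * T) w := rfl
      _ = (e * (f * df) + e) w := by rw [h]
      _ = e (f (df w)) + e w := rfl
  have dfpow : ∀ (v : V), df v = 0 → ∀ k : ℕ,
      df ((T^(k+1)) v) = ((k+1 : ℕ) : ℂ) • e ((T^k) v) := by
    intro v hv
    intro k
    induction k with
    | zero =>
      have : (T^1) v = T v := by rw [pow_one]
      rw [this, step, hv, map_zero, map_zero, zero_add]
      simp
    | succ k ih =>
      have h1 : (T^(k+2)) v = T ((T^(k+1)) v) := by
        rw [← Module.End.mul_apply, ← pow_succ']
      rw [h1, step, ih, map_smul, map_smul]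
      have h2 : f (e ((T^k) v)) = (T^(k+1)) v := by
        rw [hT]
        rw [← Module.End.mul_apply, ← Module.End.mul_apply, ← pow_succ']
      rw [h2]
      push_cast
      module
  -- third property
  have third : ∀ v : V, df v = 0 → e (L v) + x • df (L v) = 0 := by
    intro v hv
    set n := N v with hn
    have hb : ∀ k, n + 1 ≤ k → (T^k) v = 0 := fun k hk =>
      hN v k (le_trans (Nat.le_succ n) hk)
    rw [hLval v (n+1) hb, hSapp]
    rw [map_sum, map_sum, Finset.smul_sum]
    have he : ∀ k, e ((c k) • (T^k) v) = c k • e ((T^k) v) := fun k => map_smul e _ _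
    have hdfe : ∀ k ∈ Finset.range (n+1),
        x • df ((c k) • (T^k) v)
          = if k = 0 then 0 else (-(c (k-1))) • e ((T^(k-1)) v) := by
      intro k _
      rcases k with _ | j
      · simp [hv]
      · rw [map_smul, dfpow v hv j, smul_smul, smul_smul]
        have hcoef : x * c (j+1) * ((j+1 : ℕ) : ℂ) = -(c j) := by
          rw [hc]
          unfold stmt9cc
          have hj0 : ((j.factorial : ℕ) : ℂ) ≠ 0 := by exact_mod_cast j.factorial_ne_zero
          have hj1 : ((j : ℂ) + 1) ≠ 0 := Nat.cast_add_one_ne_zero j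
          have hxj : x^j ≠ 0 := pow_ne_zero _ hx
          rw [Nat.factorial_succ]
          push_cast
          field_simp
          ring
        rw [if_neg (Nat.succ_ne_zero j)]
        simp only [Nat.add_sub_cancel]
        rw [hcoef]
    rw [Finset.sum_congr rfl fun k _ => (he k), Finset.sum_congr rfl hdfe]
    have h1 : (∑ k ∈ Finset.range (n+1),
        (if k = 0 then 0 else (-(c (k-1))) • e ((T^(k-1)) v)))
        = ∑ i ∈ Finset.range n, (-(c i)) • e ((T^i) v) := by
      rw [Finset.sum_range_succ']
      simp
    have h2 : (∑ k ∈ Finset.range (n+1), c k • e ((T^k) v))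
        = ∑ k ∈ Finset.range n, c k • e ((T^k) v) := by
      rw [Finset.sum_range_succ, hN v n le_rfl, map_zero, smul_zero, add_zero]
    rw [h1, h2, ← Finset.sum_add_distrib]
    refine Finset.sum_eq_zero fun k _ => ?_
    rw [neg_smul, add_neg_cancel]
  refine ⟨L, ?_, ⟨Function.LeftInverse.injective hML,
    Function.RightInverse.surjective hLM⟩, third⟩
  intro v k₀ hb
  rw [hLval v k₀ hb, hSapp, hc]
  rfl
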